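/- Let G be a triangle-free 3-partite graph with parts V1, V2, V3, each of size n, with all pairwise edge densities d(V_i,V_j) ≥ 1/2. Then for every vertex x of G and every pair of distinct indices j ≠ k, one has |N(x) ∩ V_j| · |N(x) ∩ V_k| ≤ n²/2. -/
import Mathlib


open SimpleGraph Finset

theorem stmt4 {α : Type*} [Fintype α] [DecidableEq α] {n : ℕ}
    (G : SimpleGraph α) [DecidableRel G.Adj] (V : Fin 3 → Finset α)
    (hpart : ∀ v : α, ∃! i, v ∈ V i)
    (hind : ∀ i, ∀ x ∈ V i, ∀ y ∈ V i, ¬ G.Adj x y)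
    (hcard : ∀ i, (V i).card = n) (hn : 0 < n)
    (hdens : ∀ i j, i ≠ j → (1 : ℚ) / 2 ≤ G.edgeDensity (V i) (V j))
    (htf : G.CliqueFree 3) :
    ∀ (x : α) (j k : Fin 3), j ≠ k →
      (((G.neighborFinset x ∩ V j).card : ℚ) * ((G.neighborFinset x ∩ V k).card : ℚ)
        ≤ (n : ℚ) ^ 2 / 2) := by
  intro x j k hjk
  set A := G.neighborFinset x ∩ V j with hA
  set B := G.neighborFinset x ∩ V k with hB
  have hABsub : A ×ˢ B ⊆ V j ×ˢ V k :=
    product_subset_product inter_subset_right inter_subset_right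
  have hsub : Rel.interedges G.Adj (V j) (V k) ⊆ (V j ×ˢ V k) \ (A ×ˢ B) := by
    intro p hp
    obtain ⟨h1, h2, h3⟩ := Rel.mem_interedges_iff.mp hp
    simp only [mem_sdiff, mem_product, not_and]
    refine ⟨⟨h1, h2⟩, fun hpa hpb => ?_⟩
    rw [hA, mem_inter, mem_neighborFinset] at hpa
    rw [hB, mem_inter, mem_neighborFinset] at hpb
    exact htf {x, p.1, p.2} (is3Clique_triple_iff.mpr ⟨hpa.1, hpb.1, h3⟩)
  have h1 : A.card * B.card ≤ n * n := by
    have := card_le_card hABsub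
    simpa [card_product, hcard] using this
  have h2 : (Rel.interedges G.Adj (V j) (V k)).card ≤ n * n - A.card * B.card := by
    have := card_le_card hsub
    rwa [card_sdiff_of_subset hABsub, card_product, card_product, hcard, hcard] at this
  have hcount : (Rel.interedges G.Adj (V j) (V k)).card + A.card * B.card ≤ n * n :=
    (Nat.le_sub_iff_add_le h1).mp h2
  have hd : (1 : ℚ) / 2 ≤
      ((Rel.interedges G.Adj (V j) (V k)).card : ℚ) / ((n : ℚ) * n) := by
    have := hdens j k hjk
    rwa [SimpleGraph.edgeDensity, Rel.edgeDensity, hcard, hcard] at this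
    -- note: Rel.edgeDensity is defined via division
  have hnpos : (0 : ℚ) < (n : ℚ) * n := by positivity
  have hedge : ((n : ℚ) * n) / 2 ≤ ((Rel.interedges G.Adj (V j) (V k)).card : ℚ) := by
    rw [le_div_iff₀ hnpos] at hd
    linarith
  have hcountQ : ((Rel.interedges G.Adj (V j) (V k)).card : ℚ)
      + (A.card : ℚ) * (B.card : ℚ) ≤ (n : ℚ) * n := by
    exact_mod_cast hcount
  have : (A.card : ℚ) * (B.card : ℚ) ≤ (n : ℚ) ^ 2 / 2 := by
    nlinarith
  exact this
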